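/- Every quasitriangular structure R on a bialgebra H is a Drinfel'd twist on H: R is normalized, (ε⊗Id)(R) = 1 = (Id⊗ε)(R), and satisfies the 2-cocycle identity R₁₂·(Δ⊗Id)(R) = R₂₃·(Id⊗Δ)(R). -/

import Mathlib

open scoped TensorProduct

noncomputable section

variable (k H : Type*) [CommRing k] [Ring H] [Bialgebra k H]

/-- leg embedding `a ⊗ b ↦ a ⊗ b ⊗ 1` into `H ⊗ (H ⊗ H)`. -/
def leg12 : H ⊗[k] H →ₐ[k] H ⊗[k] (H ⊗[k] H) :=
  Algebra.TensorProduct.map (AlgHom.id k H) Algebra.TensorProduct.includeLeft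

/-- leg embedding `a ⊗ b ↦ 1 ⊗ a ⊗ b`. -/
def leg23 : H ⊗[k] H →ₐ[k] H ⊗[k] (H ⊗[k] H) :=
  Algebra.TensorProduct.includeRight

/-- leg embedding `a ⊗ b ↦ a ⊗ 1 ⊗ b`. -/
def leg13 : H ⊗[k] H →ₐ[k] H ⊗[k] (H ⊗[k] H) :=
  Algebra.TensorProduct.map (AlgHom.id k H) Algebra.TensorProduct.includeRight

/-- `(Id ⊗ Δ)` as an algebra map `H ⊗ H → H ⊗ (H ⊗ H)`. -/
def idComul : H ⊗[k] H →ₐ[k] H ⊗[k] (H ⊗[k] H) :=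
  Algebra.TensorProduct.map (AlgHom.id k H) (Bialgebra.comulAlgHom k H)

/-- `(Δ ⊗ Id)` as an algebra map `H ⊗ H → H ⊗ (H ⊗ H)` (after reassociation). -/
def comulId : H ⊗[k] H →ₐ[k] H ⊗[k] (H ⊗[k] H) :=
  (Algebra.TensorProduct.assoc k k k H H H).toAlgHom.comp
    (Algebra.TensorProduct.map (Bialgebra.comulAlgHom k H) (AlgHom.id k H))

/-- the flip `a ⊗ b ↦ b ⊗ a` as an algebra map. -/
def swapT : H ⊗[k] H →ₐ[k] H ⊗[k] H := (Algebra.TensorProduct.comm k H H).toAlgHom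

/-- A quasitriangular structure on the bialgebra `H`. -/
structure QT where
  R : H ⊗[k] H
  Rinv : H ⊗[k] H
  mul_inv : R * Rinv = 1
  inv_mul : Rinv * R = 1
  quasi_cocomm : ∀ h : H, swapT k H (Coalgebra.comul (R := k) h) * R = R * Coalgebra.comul (R := k) h
  hex1 : idComul k H R = leg13 k H R * leg12 k H R
  hex2 : comulId k H R = leg13 k H R * leg23 k H R

/-- A pre-Cartier quasitriangular bialgebra structure on `H`. -/
structure PreCartier extends QT k H where
  χ : H ⊗[k] H
  chi_comm : ∀ h : H, χ * Coalgebra.comul (R := k) h = Coalgebra.comul (R := k) h * χ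
  chi_hex1 : idComul k H χ = leg12 k H χ + leg12 k H Rinv * leg13 k H χ * leg12 k H R
  chi_hex2 : comulId k H χ = leg23 k H χ + leg23 k H Rinv * leg13 k H χ * leg23 k H R

-- auxiliary maps

/-- apply counit to leg 1 -/
def eps1 : H ⊗[k] (H ⊗[k] H) →ₐ[k] H ⊗[k] H :=
  (Algebra.TensorProduct.lid k (H ⊗[k] H)).toAlgHom.comp
    (Algebra.TensorProduct.map (Bialgebra.counitAlgHom k H) (AlgHom.id k _))

/-- apply counit to leg 3 -/
def eps3 : H ⊗[k] (H ⊗[k] H) →ₐ[k] H ⊗[k] H :=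
  Algebra.TensorProduct.map (AlgHom.id k H)
    ((Algebra.TensorProduct.rid k k H).toAlgHom.comp
      (Algebra.TensorProduct.map (AlgHom.id k H) (Bialgebra.counitAlgHom k H)))

/-- `a ⊗ b ↦ ε(a) • b` -/
def kap : H ⊗[k] H →ₗ[k] H :=
  (TensorProduct.lid k H).toLinearMap ∘ₗ LinearMap.rTensor H (Coalgebra.counit (R := k))

/-- `a ⊗ b ↦ ε(b) • a` -/
def kap' : H ⊗[k] H →ₗ[k] H :=
  (TensorProduct.rid k H).toLinearMap ∘ₗ LinearMap.lTensor H (Coalgebra.counit (R := k))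

lemma kap_tmul (a b : H) : kap k H (a ⊗ₜ b) = Coalgebra.counit (R := k) a • b := rfl
lemma kap'_tmul (a b : H) : kap' k H (a ⊗ₜ b) = Coalgebra.counit (R := k) b • a := rfl

def swap12 : H ⊗[k] (H ⊗[k] H) →ₐ[k] H ⊗[k] (H ⊗[k] H) :=
  ((Algebra.TensorProduct.assoc k k k H H H).toAlgHom.comp
    (Algebra.TensorProduct.map (swapT k H) (AlgHom.id k H))).comp
    (Algebra.TensorProduct.assoc k k k H H H).symm.toAlgHom

lemma swap12_tmul (a b c : H) : swap12 k H (a ⊗ₜ (b ⊗ₜ c)) = b ⊗ₜ (a ⊗ₜ c) := by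
  simp [swap12, swapT, Algebra.TensorProduct.assoc_symm_tmul, Algebra.TensorProduct.assoc_tmul]

lemma eps1_assoc (y : H ⊗[k] H) (c : H) :
    eps1 k H ((Algebra.TensorProduct.assoc k k k H H H) (y ⊗ₜ c)) = (kap k H y) ⊗ₜ c := by
  induction y using TensorProduct.induction_on with
  | zero => simp
  | tmul a b =>
      simp [Algebra.TensorProduct.assoc_tmul, eps1, kap_tmul, TensorProduct.smul_tmul']
  | add x y hx hy =>
      simp only [TensorProduct.add_tmul, map_add, hx, hy]

lemma eps1_comulId (x : H ⊗[k] H) : eps1 k H (comulId k H x) = x := by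
  induction x using TensorProduct.induction_on with
  | zero => simp
  | tmul a b =>
      have : comulId k H (a ⊗ₜ b) =
          (Algebra.TensorProduct.assoc k k k H H H) ((Coalgebra.comul (R := k) a) ⊗ₜ b) := by
        simp [comulId, Bialgebra.comulAlgHom_apply]
      rw [this, eps1_assoc]
      have : kap k H (Coalgebra.comul (R := k) a) = a := by
        simp [kap, Coalgebra.rTensor_counit_comul]
      rw [this]
  | add x y hx hy => simp [hx, hy]

lemma eps1_leg23 (x : H ⊗[k] H) : eps1 k H (leg23 k H x) = x := by
  simp [eps1, leg23]

lemma eps1_leg13 (x : H ⊗[k] H) : eps1 k H (leg13 k H x) = (1 : H) ⊗ₜ kap k H x := by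
  induction x using TensorProduct.induction_on with
  | zero => simp
  | tmul a b => simp [eps1, leg13, kap_tmul, TensorProduct.tmul_smul]
  | add x y hx hy => simp [hx, hy, TensorProduct.tmul_add]

lemma eps3_lemma (a : H) (y : H ⊗[k] H) : eps3 k H (a ⊗ₜ y) = a ⊗ₜ kap' k H y := by
  induction y using TensorProduct.induction_on with
  | zero => simp
  | tmul b c => simp [eps3, kap'_tmul, TensorProduct.tmul_smul]
  | add x y hx hy => simp [TensorProduct.tmul_add, hx, hy]

lemma eps3_idComul (x : H ⊗[k] H) : eps3 k H (idComul k H x) = x := by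
  induction x using TensorProduct.induction_on with
  | zero => simp
  | tmul a b =>
      have : idComul k H (a ⊗ₜ b) = a ⊗ₜ (Coalgebra.comul (R := k) b) := by
        simp [idComul, Bialgebra.comulAlgHom_apply]
      rw [this, eps3_lemma]
      have : kap' k H (Coalgebra.comul (R := k) b) = b := by
        simp [kap', Coalgebra.lTensor_counit_comul]
      rw [this]
  | add x y hx hy => simp [hx, hy]

lemma eps3_leg12 (x : H ⊗[k] H) : eps3 k H (leg12 k H x) = x := by
  induction x using TensorProduct.induction_on with
  | zero => simp
  | tmul a b => simp [eps3, leg12]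
  | add x y hx hy => simp [hx, hy]

lemma eps3_leg13 (x : H ⊗[k] H) : eps3 k H (leg13 k H x) = (kap' k H x) ⊗ₜ (1 : H) := by
  induction x using TensorProduct.induction_on with
  | zero => simp
  | tmul a b =>
      simp [eps3, leg13, kap'_tmul, TensorProduct.smul_tmul', TensorProduct.tmul_smul]
  | add x y hx hy => simp [hx, hy, TensorProduct.add_tmul]

lemma swap12_leg13 (x : H ⊗[k] H) : swap12 k H (leg13 k H x) = leg23 k H x := by
  induction x using TensorProduct.induction_on with
  | zero => simp
  | tmul a b =>
      have h1 : leg13 k H (a ⊗ₜ b) = a ⊗ₜ ((1:H) ⊗ₜ b) := by simp [leg13]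
      rw [h1, swap12_tmul]; simp [leg23]
  | add x y hx hy => simp [hx, hy]

lemma swap12_leg23 (x : H ⊗[k] H) : swap12 k H (leg23 k H x) = leg13 k H x := by
  induction x using TensorProduct.induction_on with
  | zero => simp
  | tmul a b =>
      have h1 : leg23 k H (a ⊗ₜ b) = (1:H) ⊗ₜ (a ⊗ₜ b) := by simp [leg23]
      rw [h1, swap12_tmul]; simp [leg13]
  | add x y hx hy => simp [hx, hy]

lemma swap12_leg12 (x : H ⊗[k] H) : swap12 k H (leg12 k H x) = leg12 k H (swapT k H x) := by
  induction x using TensorProduct.induction_on with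
  | zero => simp
  | tmul a b =>
      have h1 : leg12 k H (a ⊗ₜ b) = a ⊗ₜ (b ⊗ₜ (1:H)) := by simp [leg12]
      rw [h1, swap12_tmul]; simp [leg12, swapT]
  | add x y hx hy => simp [hx, hy]

lemma assoc_eq (y : H ⊗[k] H) (c : H) :
    (Algebra.TensorProduct.assoc k k k H H H) (y ⊗ₜ c) =
      leg12 k H y * ((1:H) ⊗ₜ ((1:H) ⊗ₜ c)) := by
  induction y using TensorProduct.induction_on with
  | zero => simp
  | tmul a b =>
      simp [Algebra.TensorProduct.assoc_tmul, leg12, Algebra.TensorProduct.tmul_mul_tmul]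
  | add x y hx hy => simp [TensorProduct.add_tmul, hx, hy, add_mul]

lemma leg12_comm (y : H ⊗[k] H) (c : H) :
    leg12 k H y * ((1:H) ⊗ₜ ((1:H) ⊗ₜ c)) = ((1:H) ⊗ₜ ((1:H) ⊗ₜ c)) * leg12 k H y := by
  induction y using TensorProduct.induction_on with
  | zero => simp
  | tmul a b => simp [leg12, Algebra.TensorProduct.tmul_mul_tmul]
  | add x y hx hy => simp [hx, hy, add_mul, mul_add]

lemma key (Q : QT k H) (x : H ⊗[k] H) :
    leg12 k H Q.R * comulId k H x = swap12 k H (comulId k H x) * leg12 k H Q.R := by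
  induction x using TensorProduct.induction_on with
  | zero => simp
  | tmul h c =>
      have hc : comulId k H (h ⊗ₜ c) =
          leg12 k H (Coalgebra.comul (R := k) h) * ((1:H) ⊗ₜ ((1:H) ⊗ₜ c)) := by
        rw [show comulId k H (h ⊗ₜ c) =
          (Algebra.TensorProduct.assoc k k k H H H) ((Coalgebra.comul (R := k) h) ⊗ₜ c) by
            simp [comulId, Bialgebra.comulAlgHom_apply], assoc_eq]
      have hu : swap12 k H ((1:H) ⊗ₜ[k] ((1:H) ⊗ₜ[k] c)) = (1:H) ⊗ₜ[k] ((1:H) ⊗ₜ[k] c) :=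
        swap12_tmul k H 1 1 c
      have hswap : swap12 k H (leg12 k H (Coalgebra.comul (R := k) h)
            * ((1:H) ⊗ₜ ((1:H) ⊗ₜ c))) =
          leg12 k H (swapT k H (Coalgebra.comul (R := k) h)) * ((1:H) ⊗ₜ ((1:H) ⊗ₜ c)) := by
        rw [map_mul, swap12_leg12, hu]
      rw [hc, hswap, ← mul_assoc, ← map_mul, ← Q.quasi_cocomm, map_mul, mul_assoc,
        leg12_comm, mul_assoc]
  | add x y hx hy => simp [map_add, mul_add, add_mul, hx, hy]

/-- every quasitriangular structure `R` on a bialgebra `H` is a Drinfel'd twist: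
`(ε⊗Id)(R) = 1 = (Id⊗ε)(R)` and `R₁₂ · (Δ⊗Id)(R) = R₂₃ · (Id⊗Δ)(R)`. -/
theorem quasitriangular_is_twist (Q : QT k H) :
    LinearMap.rTensor H (Coalgebra.counit (R := k) (A := H)) Q.R = (1 : k) ⊗ₜ[k] (1 : H) ∧
    LinearMap.lTensor H (Coalgebra.counit (R := k) (A := H)) Q.R = (1 : H) ⊗ₜ[k] (1 : k) ∧
    leg12 k H Q.R * comulId k H Q.R = leg23 k H Q.R * idComul k H Q.R := by
  have hkap : kap k H Q.R = 1 := by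
    have h2 := congrArg (eps1 k H) Q.hex2
    rw [map_mul, eps1_comulId, eps1_leg23, eps1_leg13] at h2
    have h3 : ((1:H) ⊗ₜ[k] kap k H Q.R) = 1 := by
      have := congrArg (· * Q.Rinv) h2
      simpa [mul_assoc, Q.mul_inv] using this.symm
    have := congrArg (kap k H) h3
    simpa [kap_tmul, Algebra.TensorProduct.one_def, kap_tmul] using this
  have hkap' : kap' k H Q.R = 1 := by
    have h2 := congrArg (eps3 k H) Q.hex1
    rw [map_mul, eps3_idComul, eps3_leg12, eps3_leg13] at h2
    have h3 : ((kap' k H Q.R) ⊗ₜ[k] (1:H)) = 1 := by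
      have := congrArg (· * Q.Rinv) h2
      simpa [mul_assoc, Q.mul_inv] using this.symm
    have := congrArg (kap' k H) h3
    simpa [kap'_tmul, Algebra.TensorProduct.one_def] using this
  refine ⟨?_, ?_, ?_⟩
  · have : (TensorProduct.lid k H) (LinearMap.rTensor H (Coalgebra.counit (R := k)) Q.R) = 1 :=
      hkap
    have := congrArg (TensorProduct.lid k H).symm this
    simpa using this
  · have : (TensorProduct.rid k H) (LinearMap.lTensor H (Coalgebra.counit (R := k)) Q.R) = 1 :=
      hkap'
    have := congrArg (TensorProduct.rid k H).symm this
    simpa using this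
  · rw [key k H Q Q.R, Q.hex2, map_mul, swap12_leg13, swap12_leg23, Q.hex1, mul_assoc]

end
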